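/- The bracket rules of the solvable extension R_{𝐧₁}(0) — namely 𝐧₁ together with x, y, where [e_{3i-2},x] = i e_{3i-2}, [e_{3i-1},x] = (i-1) e_{3i-1}, [e_{3i},x] = i e_{3i}, [e_{3i-2},y] = −e_{3i-2}, [e_{3i-1},y] = e_{3i-1}, [e_{3i},y] = 0, [x,y] = 0 — satisfy the Jacobi identity, so R_{𝐧₁}(0) is a Lie algebra containing 𝐧₁ as an ideal. -/

import Mathlib

/-- Structure constants of `𝐧₁`. -/
def cc (i j : ℕ) : ℤ :=
  if ((i : ℤ) - j) % 3 = 1 then 1 else if ((i : ℤ) - j) % 3 = 2 then -1 else 0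

/-- The free `ℂ`-vector space on `{e_i : i ≥ 1}`. -/
abbrev NSpace := {n : ℕ // 0 < n} →₀ ℂ

/-- The bracket of `𝐧₁`: `[e_i,e_j] = c_{i,j} e_{i+j}`, extended bilinearly. -/
noncomputable def n1br (f g : NSpace) : NSpace :=
  f.sum fun i a => g.sum fun j b =>
    (a * b * (cc i.1 j.1 : ℂ)) •
      Finsupp.single ⟨i.1 + j.1, Nat.add_pos_left i.2 j.1⟩ (1 : ℂ)

/-- Eigenvalue of `ad x` (from the right) on `e_n`:
`[e_{3i-2},x] = i e_{3i-2}`, `[e_{3i-1},x] = (i-1) e_{3i-1}`, `[e_{3i},x] = i e_{3i}`. -/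
def lam (n : ℕ) : ℕ :=
  if n % 3 = 1 then (n + 2) / 3 else if n % 3 = 2 then (n - 2) / 3 else n / 3

/-- Eigenvalue of `ad y` (from the right) on `e_n`:
`[e_{3i-2},y] = -e_{3i-2}`, `[e_{3i-1},y] = e_{3i-1}`, `[e_{3i},y] = 0`. -/
def mu (n : ℕ) : ℤ :=
  if n % 3 = 1 then -1 else if n % 3 = 2 then 1 else 0

/-- The diagonal action `f ↦ [f, x]` on `𝐧₁`. -/
noncomputable def Dx (f : NSpace) : NSpace :=
  f.sum fun i a => (a * (lam i.1 : ℂ)) • Finsupp.single i (1 : ℂ)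

/-- The diagonal action `f ↦ [f, y]` on `𝐧₁`. -/
noncomputable def Dy (f : NSpace) : NSpace :=
  f.sum fun i a => (a * (mu i.1 : ℂ)) • Finsupp.single i (1 : ℂ)

/-- The underlying space of `R_{𝐧₁}(0) = ℂx ⊕ ℂy ⊕ 𝐧₁`: an element `(a, b, f)`
represents `a·x + b·y + f`. -/
abbrev RSpace := ℂ × ℂ × NSpace

/-- The bracket of `R_{𝐧₁}(0)`, extending the bracket of `𝐧₁` by the rules
`[e_{3i-2},x] = i e_{3i-2}`, `[e_{3i-1},x] = (i-1)e_{3i-1}`, `[e_{3i},x] = i e_{3i}`,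
`[e_{3i-2},y] = -e_{3i-2}`, `[e_{3i-1},y] = e_{3i-1}`, `[e_{3i},y] = 0`, `[x,y] = 0`. -/
noncomputable def rbr (p q : RSpace) : RSpace :=
  (0, 0, n1br p.2.2 q.2.2 + q.1 • Dx p.2.2 + q.2.1 • Dy p.2.2
    - p.1 • Dx q.2.2 - p.2.1 • Dy q.2.2)

-- linear map versions
noncomputable def Bil : NSpace →ₗ[ℂ] NSpace →ₗ[ℂ] NSpace :=
  Finsupp.lift _ ℂ _ fun i => Finsupp.lift _ ℂ _ fun j =>
    (cc i.1 j.1 : ℂ) • Finsupp.single ⟨i.1 + j.1, Nat.add_pos_left i.2 j.1⟩ (1 : ℂ)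

noncomputable def Lx : NSpace →ₗ[ℂ] NSpace :=
  Finsupp.lift _ ℂ _ fun i => (lam i.1 : ℂ) • Finsupp.single i (1 : ℂ)

noncomputable def Ly : NSpace →ₗ[ℂ] NSpace :=
  Finsupp.lift _ ℂ _ fun i => (mu i.1 : ℂ) • Finsupp.single i (1 : ℂ)

lemma n1br_eq (f g : NSpace) : n1br f g = Bil f g := by
  simp only [n1br, Bil, Finsupp.lift_apply, Finsupp.sum, LinearMap.coe_sum,
    Finset.sum_apply, LinearMap.smul_apply, Finsupp.smul_sum, smul_smul, Finset.smul_sum]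
  refine Finset.sum_congr rfl fun i _ => Finset.sum_congr rfl fun j _ => ?_
  ring_nf

lemma Dx_eq (f : NSpace) : Dx f = Lx f := by
  simp only [Dx, Lx, Finsupp.lift_apply, Finsupp.sum, smul_smul]

lemma Dy_eq (f : NSpace) : Dy f = Ly f := by
  simp only [Dy, Ly, Finsupp.lift_apply, Finsupp.sum, smul_smul]

lemma Bil_single (i j : {n : ℕ // 0 < n}) (a b : ℂ) :
    Bil (Finsupp.single i a) (Finsupp.single j b) =
      (a * b * (cc i.1 j.1 : ℂ)) •
        Finsupp.single ⟨i.1 + j.1, Nat.add_pos_left i.2 j.1⟩ (1 : ℂ) := by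
  simp only [Bil, Finsupp.lift_apply]
  rw [Finsupp.sum_single_index (by simp)]
  simp only [LinearMap.smul_apply, Finsupp.lift_apply]
  rw [Finsupp.sum_single_index (by simp), smul_smul, smul_smul]

lemma Lx_single (i : {n : ℕ // 0 < n}) (a : ℂ) :
    Lx (Finsupp.single i a) = (a * (lam i.1 : ℂ)) • Finsupp.single i (1 : ℂ) := by
  simp [Lx, Finsupp.lift_apply, Finsupp.sum_single_index, smul_smul]

lemma Ly_single (i : {n : ℕ // 0 < n}) (a : ℂ) :
    Ly (Finsupp.single i a) = (a * (mu i.1 : ℂ)) • Finsupp.single i (1 : ℂ) := by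
  simp [Ly, Finsupp.lift_apply, Finsupp.sum_single_index, smul_smul]

lemma cc_skew (i j : ℕ) : cc i j = - cc j i := by
  unfold cc; split_ifs <;> omega

lemma lam_add (i j : ℕ) (h : cc i j ≠ 0) : lam (i + j) = lam i + lam j := by
  unfold cc at h; unfold lam; split_ifs at h ⊢ <;> omega

lemma mu_add (i j : ℕ) (h : cc i j ≠ 0) : mu (i + j) = mu i + mu j := by
  unfold cc at h; unfold mu; split_ifs at h ⊢ <;> omega

lemma cc_cases (m n : ℕ) : (cc m n = 1 ∧ ((m:ℤ) - n) % 3 = 1) ∨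
    (cc m n = -1 ∧ ((m:ℤ) - n) % 3 = 2) ∨ (cc m n = 0 ∧ ((m:ℤ) - n) % 3 = 0) := by
  unfold cc; split_ifs <;> omega

def zcc (a b : ZMod 3) : ℤ := if a - b = 1 then 1 else if a - b = 2 then -1 else 0

lemma cc_eq_zcc (m n : ℕ) : cc m n = zcc (m : ZMod 3) (n : ZMod 3) := by
  have h : ((m : ZMod 3) - (n : ZMod 3)) = (((m : ℤ) - (n : ℤ) : ℤ) : ZMod 3) := by
    push_cast; ring
  unfold cc zcc
  rw [h]
  have hx : (((m:ℤ) - n : ℤ) : ZMod 3) = ((((m:ℤ) - n) % 3 : ℤ) : ZMod 3) := by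
    rw [ZMod.intCast_eq_intCast_iff]
    simp [Int.ModEq, Int.emod_emod_of_dvd]
  have h3 : ((m:ℤ)-n) % 3 = 0 ∨ ((m:ℤ)-n) % 3 = 1 ∨ ((m:ℤ)-n) % 3 = 2 := by omega
  rcases h3 with h3|h3|h3 <;> rw [hx, h3] <;> norm_num <;> decide

lemma zcc_jacobi : ∀ a b c : ZMod 3,
    zcc b c * zcc a (b + c) + zcc c a * zcc b (c + a) + zcc a b * zcc c (a + b) = 0 := by
  decide

lemma cc_jacobi (i j k : ℕ) :
    cc j k * cc i (j + k) + cc k i * cc j (k + i) + cc i j * cc k (i + j) = 0 := by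
  simp only [cc_eq_zcc, Nat.cast_add]
  exact zcc_jacobi _ _ _

lemma single_nat (m n : ℕ) (hm : 0 < m) (hn : 0 < n) (h : m = n) :
    (Finsupp.single (⟨m, hm⟩ : {n : ℕ // 0 < n}) (1:ℂ)) = Finsupp.single ⟨n, hn⟩ 1 := by
  subst h; rfl

lemma Bil_skew (f g : NSpace) : Bil f g = - Bil g f := by
  induction f using Finsupp.induction_linear with
  | zero => simp
  | add f1 f2 h1 h2 => simp only [map_add, LinearMap.add_apply, h1, h2]; abel
  | single i a =>
    induction g using Finsupp.induction_linear with
    | zero => simp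
    | add g1 g2 h1 h2 => simp only [map_add, LinearMap.add_apply, h1, h2]; abel
    | single j b =>
      rw [Bil_single, Bil_single,
        single_nat (j.1 + i.1) (i.1 + j.1) (Nat.add_pos_left j.2 i.1)
          (Nat.add_pos_left i.2 j.1) (Nat.add_comm _ _),
        cc_skew j.1 i.1]
      push_cast
      module

lemma Lx_der (f g : NSpace) : Lx (Bil f g) = Bil f (Lx g) - Bil g (Lx f) := by
  induction f using Finsupp.induction_linear with
  | zero => simp
  | add f1 f2 h1 h2 =>
    simp only [map_add, LinearMap.add_apply, h1, h2]; abel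
  | single i a =>
    induction g using Finsupp.induction_linear with
    | zero => simp
    | add g1 g2 h1 h2 =>
      simp only [map_add, LinearMap.add_apply, h1, h2]; abel
    | single j b =>
      by_cases hc : cc i.1 j.1 = 0
      · have hc2 : cc j.1 i.1 = 0 := by rw [cc_skew j.1 i.1, hc, neg_zero]
        simp only [Bil_single, Lx_single, map_smul, smul_smul, hc, hc2]
        push_cast
        module
      · have hl := lam_add i.1 j.1 hc
        simp only [Bil_single, Lx_single, map_smul, smul_smul]
        rw [single_nat (j.1 + i.1) (i.1 + j.1) (Nat.add_pos_left j.2 i.1)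
            (Nat.add_pos_left i.2 j.1) (Nat.add_comm _ _),
          cc_skew j.1 i.1]
        rw [← sub_smul]
        congr 1
        push_cast [hl]
        ring

lemma Ly_der (f g : NSpace) : Ly (Bil f g) = Bil f (Ly g) - Bil g (Ly f) := by
  induction f using Finsupp.induction_linear with
  | zero => simp
  | add f1 f2 h1 h2 =>
    simp only [map_add, LinearMap.add_apply, h1, h2]; abel
  | single i a =>
    induction g using Finsupp.induction_linear with
    | zero => simp
    | add g1 g2 h1 h2 =>
      simp only [map_add, LinearMap.add_apply, h1, h2]; abel
    | single j b =>
      by_cases hc : cc i.1 j.1 = 0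
      · have hc2 : cc j.1 i.1 = 0 := by rw [cc_skew j.1 i.1, hc, neg_zero]
        simp only [Bil_single, Ly_single, map_smul, smul_smul, hc, hc2]
        push_cast
        module
      · have hl := mu_add i.1 j.1 hc
        simp only [Bil_single, Ly_single, map_smul, smul_smul]
        rw [single_nat (j.1 + i.1) (i.1 + j.1) (Nat.add_pos_left j.2 i.1)
            (Nat.add_pos_left i.2 j.1) (Nat.add_comm _ _),
          cc_skew j.1 i.1]
        rw [← sub_smul]
        congr 1
        push_cast [hl]
        ring

lemma LxLy_comm (f : NSpace) : Lx (Ly f) = Ly (Lx f) := by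
  induction f using Finsupp.induction_linear with
  | zero => simp
  | add f1 f2 h1 h2 => simp only [map_add, h1, h2]
  | single i a =>
    rw [Ly_single, Lx_single, map_smul, map_smul, Lx_single, Ly_single,
      smul_smul, smul_smul]
    congr 1
    ring

lemma Bil_jacobi (f g h : NSpace) :
    Bil f (Bil g h) + Bil g (Bil h f) + Bil h (Bil f g) = 0 := by
  induction f using Finsupp.induction_linear with
  | zero => simp
  | add f1 f2 h1 h2 =>
    have h3 := congrArg₂ (· + ·) h1 h2
    simp only [add_zero] at h3
    rw [← h3]
    simp only [map_add, LinearMap.add_apply]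
    abel
  | single i a =>
    induction g using Finsupp.induction_linear with
    | zero => simp
    | add g1 g2 h1 h2 =>
      have h3 := congrArg₂ (· + ·) h1 h2
      simp only [add_zero] at h3
      rw [← h3]
      simp only [map_add, LinearMap.add_apply]
      abel
    | single j b =>
      induction h using Finsupp.induction_linear with
      | zero => simp
      | add k1 k2 h1 h2 =>
        have h3 := congrArg₂ (· + ·) h1 h2
        simp only [add_zero] at h3
        rw [← h3]
        simp only [map_add, LinearMap.add_apply]
        abel
      | single k c =>
        simp only [Bil_single, map_smul]
        simp only [Bil_single, smul_smul]
        rw [single_nat (j.1 + (k.1 + i.1)) (i.1 + (j.1 + k.1))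
            (Nat.add_pos_left j.2 _) (Nat.add_pos_left i.2 _) (by omega),
          single_nat (k.1 + (i.1 + j.1)) (i.1 + (j.1 + k.1))
            (Nat.add_pos_left k.2 _) (Nat.add_pos_left i.2 _) (by omega)]
        rw [← add_smul, ← add_smul]
        have hc := cc_jacobi i.1 j.1 k.1
        have hc' : ((cc j.1 k.1 * cc i.1 (j.1 + k.1) + cc k.1 i.1 * cc j.1 (k.1 + i.1)
            + cc i.1 j.1 * cc k.1 (i.1 + j.1) : ℤ) : ℂ) = 0 := by exact_mod_cast hc
        push_cast at hc'
        apply smul_eq_zero_of_left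
        linear_combination a * b * c * hc'

/-- the bracket rules of `R_{𝐧₁}(0)` satisfy antisymmetry and the Jacobi
identity, so `R_{𝐧₁}(0)` is a Lie algebra containing `𝐧₁` as an ideal. -/
theorem statement12 :
    (∀ p q : RSpace, rbr p q = - rbr q p) ∧
    (∀ p q r : RSpace, rbr p (rbr q r) + rbr q (rbr r p) + rbr r (rbr p q) = 0) ∧
    (∀ p q : RSpace, p.1 = 0 → p.2.1 = 0 → (rbr p q).1 = 0 ∧ (rbr p q).2.1 = 0) := by
  refine ⟨?_, ?_, ?_⟩
  · rintro ⟨p1, p2, f⟩ ⟨q1, q2, g⟩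
    simp only [rbr, n1br_eq, Dx_eq, Dy_eq, Prod.neg_mk, neg_zero, Prod.mk.injEq,
      true_and]
    rw [Bil_skew f g]
    module
  · rintro ⟨p1, p2, f⟩ ⟨q1, q2, g⟩ ⟨r1, r2, h⟩
    simp only [rbr, n1br_eq, Dx_eq, Dy_eq]
    simp only [Prod.mk_add_mk, Prod.mk_eq_zero, add_zero, true_and]
    simp only [map_add, map_sub, map_smul, LinearMap.add_apply, LinearMap.sub_apply,
      LinearMap.smul_apply]
    rw [Lx_der g h, Lx_der h f, Lx_der f g, Ly_der g h, Ly_der h f, Ly_der f g]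
    simp only [LxLy_comm]
    have hJ := Bil_jacobi f g h
    rw [show Bil f (Bil g h) = (Bil f (Bil g h) + Bil g (Bil h f) + Bil h (Bil f g))
        - Bil g (Bil h f) - Bil h (Bil f g) from by abel, hJ]
    module
  · intro p q h1 h2
    simp [rbr]
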